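/- Let G be a finite group and n a positive integer. The number of pairs (x, y) ∈ G² such that {x, y} generates G is divisible by the order of the commutator subgroup [G, G]. -/

import Mathlib

open Subgroup QuotientGroup MulAction
open scoped commutatorElement

universe u

private lemma card_set_eq_sum_fibers {α β : Type*} [Finite α] [Fintype β] (S : Set α) (f : α → β) :
    Nat.card S = ∑ b : β, Nat.card {x : α // x ∈ S ∧ f x = b} := by
  classical
  have : Fintype α := Fintype.ofFinite α
  have e : (Σ b : β, {x : α // x ∈ S ∧ f x = b}) ≃ S :=
    (Equiv.sigmaCongrRight fun b => (Equiv.subtypeSubtypeEquivSubtypeInter _ _).symm).trans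
      (Equiv.sigmaFiberEquiv fun s : S => f s.val)
  rw [← Nat.card_congr e, Nat.card_eq_fintype_card, Fintype.card_sigma]
  simp [Nat.card_eq_fintype_card]

private lemma card_dvd_of_free_action {M α : Type*} [Group M] [Finite M] [Finite α]
    [MulAction M α] (h : ∀ (m : M) (a : α), m • a = a → m = 1) :
    Nat.card M ∣ Nat.card α := by
  classical
  have hstab : ∀ a : α, stabilizer M a = ⊥ := fun a => by
    ext m
    simp only [mem_stabilizer_iff, Subgroup.mem_bot]
    exact ⟨fun hm => h m a hm, fun hm => by simp [hm]⟩
  have e2 : α ≃ (orbitRel.Quotient M α) × M :=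
    (selfEquivSigmaOrbitsQuotientStabilizer M α).trans
      ((Equiv.sigmaCongrRight fun ω =>
        (Subgroup.quotientEquivOfEq (hstab _)).trans (QuotientGroup.quotientBot (G := M)).toEquiv).trans
        (Equiv.sigmaEquivProd _ M))
  rw [Nat.card_congr e2, Nat.card_prod]
  exact dvd_mul_left _ _

private lemma normal_of_le_center' {G : Type*} [Group G] {M : Subgroup G}
    (hc : M ≤ Subgroup.center G) : M.Normal := by
  constructor
  intro m hm g
  have hcm := Subgroup.mem_center_iff.mp (hc hm) g
  have : g * m * g⁻¹ = m := by rw [hcm]; simp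
  rwa [this]

private lemma eq_top_of_sup_central {G : Type*} [Group G] {M H : Subgroup G}
    (hc : M ≤ Subgroup.center G) (hle : M ≤ commutator G) (h : H ⊔ M = ⊤) : H = ⊤ := by
  haveI : M.Normal := normal_of_le_center' hc
  have hdecomp : ∀ g : G, ∃ h' ∈ H, ∃ m ∈ M, h' * m = g := by
    intro g
    have hg : g ∈ (↑(H ⊔ M) : Set G) := by rw [h]; trivial
    rw [Subgroup.mul_normal] at hg
    obtain ⟨h', hh', m, hm, hmm⟩ := hg
    exact ⟨h', hh', m, hm, hmm⟩
  have hcomm : commutator G ≤ H := by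
    rw [commutator_def, Subgroup.commutator_le]
    intro p _ q _
    obtain ⟨h₁, hh₁, m₁, hm₁, rfl⟩ := hdecomp p
    obtain ⟨h₂, hh₂, m₂, hm₂, rfl⟩ := hdecomp q
    haveI : H.Normal := by
      constructor
      intro x hx g
      obtain ⟨h', hh', m, hm, rfl⟩ := hdecomp g
      have hmx : m * x * m⁻¹ = x := by
        rw [show m * x = x * m from (Subgroup.mem_center_iff.mp (hc hm) x).symm]; simp
      have hrw : h' * m * x * (h' * m)⁻¹ = h' * (m * x * m⁻¹) * h'⁻¹ := by group
      rw [hrw, hmx]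
      exact H.mul_mem (H.mul_mem hh' hx) (H.inv_mem hh')
    have key : (QuotientGroup.mk' H) ⁅h₁ * m₁, h₂ * m₂⁆ = 1 := by
      rw [map_commutatorElement]
      have e1 : (QuotientGroup.mk' H) (h₁ * m₁) = (QuotientGroup.mk' H) m₁ := by
        rw [map_mul, show (QuotientGroup.mk' H) h₁ = 1 from (QuotientGroup.eq_one_iff h₁).mpr hh₁,
          one_mul]
      have e2 : (QuotientGroup.mk' H) (h₂ * m₂) = (QuotientGroup.mk' H) m₂ := by
        rw [map_mul, show (QuotientGroup.mk' H) h₂ = 1 from (QuotientGroup.eq_one_iff h₂).mpr hh₂,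
          one_mul]
      rw [e1, e2, ← map_commutatorElement,
        commutatorElement_eq_one_iff_commute.mpr
          ((Subgroup.mem_center_iff.mp (hc hm₂) m₁)), map_one]
    rwa [QuotientGroup.mk'_apply, QuotientGroup.eq_one_iff] at key
  rw [sup_eq_left.mpr (le_trans hle hcomm)] at h
  exact h

private lemma card_mk_fiber {G : Type*} [Group G] [Finite G] (M : Subgroup G) [M.Normal]
    (q : G ⧸ M) : Nat.card {g : G // (QuotientGroup.mk g : G ⧸ M) = q} = Nat.card M := by
  obtain ⟨x₀, rfl⟩ := QuotientGroup.mk_surjective q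
  apply Nat.card_congr
  refine ⟨fun g => ⟨x₀⁻¹ * g.val, QuotientGroup.eq.mp g.property.symm⟩,
    fun m => ⟨x₀ * (m : G), ?_⟩, fun g => ?_, fun m => ?_⟩
  · exact QuotientGroup.mk_mul_of_mem x₀ m.2
  · ext; simp
  · ext; simp

private lemma lemA : ∀ (n : ℕ) (G : Type u) [Group G] [Finite G],
    Nat.card (commutator G) ≤ n → ∀ (a b : G ⧸ commutator G),
    Nat.card (commutator G) ∣
      Nat.card {p : G × G | Subgroup.closure {p.1, p.2} = ⊤ ∧
        (QuotientGroup.mk p.1 : G ⧸ commutator G) = a ∧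
        (QuotientGroup.mk p.2 : G ⧸ commutator G) = b} := by
  intro n
  induction n with
  | zero =>
    intro G _ _ hn a b
    have := Nat.card_pos (α := (commutator G))
    omega
  | succ n ih =>
    intro G _ _ hn a b
    classical
    set S : Set (G × G) := {p : G × G | Subgroup.closure {p.1, p.2} = ⊤ ∧
        (QuotientGroup.mk p.1 : G ⧸ commutator G) = a ∧
        (QuotientGroup.mk p.2 : G ⧸ commutator G) = b} with hSdef
    by_cases hz : Subgroup.center G ⊓ commutator G = ⊥
    · -- free conjugation action of the commutator subgroup
      have hmkconj : ∀ (g x : G), g ∈ commutator G →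
          (QuotientGroup.mk (g * x * g⁻¹) : G ⧸ commutator G) = QuotientGroup.mk x := by
        intro g x _
        apply QuotientGroup.eq.mpr
        have h' : (g * x * g⁻¹)⁻¹ * x = ⁅g, x⁻¹⁆ := by
          rw [commutatorElement_def]; group
        rw [h']
        exact commutator_def G ▸
          Subgroup.commutator_mem_commutator (Subgroup.mem_top _) (Subgroup.mem_top _)
      have hgenconj : ∀ (g x y : G), Subgroup.closure {x, y} = ⊤ →
          Subgroup.closure {g * x * g⁻¹, g * y * g⁻¹} = ⊤ := by
        intro g x y hxy
        have hmapcl := MonoidHom.map_closure (MulAut.conj g).toMonoidHom {x, y}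
        rw [Set.image_pair, hxy, Subgroup.map_top_of_surjective _ (MulEquiv.surjective _)]
          at hmapcl
        simpa [MulAut.conj_apply] using hmapcl.symm
      have hconj : ∀ (g : commutator G) (p : G × G), p ∈ S →
          ((g : G) * p.1 * (g : G)⁻¹, (g : G) * p.2 * (g : G)⁻¹) ∈ S := by
        intro g p hp
        obtain ⟨hgen, h1, h2⟩ := hp
        exact ⟨hgenconj (g : G) p.1 p.2 hgen,
          by rw [hmkconj (g : G) p.1 g.2]; exact h1,
          by rw [hmkconj (g : G) p.2 g.2]; exact h2⟩
      letI act : MulAction (commutator G) S :=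
        { smul := fun g p => ⟨((g : G) * p.val.1 * (g : G)⁻¹, (g : G) * p.val.2 * (g : G)⁻¹),
            hconj g p.val p.property⟩
          one_smul := fun p => by
            apply Subtype.ext
            show ((1 : G) * p.val.1 * (1 : G)⁻¹, (1 : G) * p.val.2 * (1 : G)⁻¹) = p.val
            simp
          mul_smul := fun g h p => by
            apply Subtype.ext
            show (((g * h : commutator G) : G) * p.val.1 * ((g * h : commutator G) : G)⁻¹,
              ((g * h : commutator G) : G) * p.val.2 * ((g * h : commutator G) : G)⁻¹)
              = ((g : G) * ((h : G) * p.val.1 * (h : G)⁻¹) * (g : G)⁻¹,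
                 (g : G) * ((h : G) * p.val.2 * (h : G)⁻¹) * (g : G)⁻¹)
            refine Prod.ext ?_ ?_ <;> push_cast <;> group }
      have hfree : ∀ (g : commutator G) (p : S), g • p = p → g = 1 := by
        intro g p hg
        have h1 : (g : G) * p.val.1 * (g : G)⁻¹ = p.val.1 :=
          congrArg (fun q : S => q.val.1) hg
        have h2 : (g : G) * p.val.2 * (g : G)⁻¹ = p.val.2 :=
          congrArg (fun q : S => q.val.2) hg
        have hcen : (g : G) ∈ Subgroup.center G := by
          rw [Subgroup.mem_center_iff]
          intro h
          have hle : (⊤ : Subgroup G) ≤ Subgroup.centralizer {(g : G)} := by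
            rw [← p.property.1]
            apply (Subgroup.closure_le _).mpr
            intro x hx
            rcases hx with hx | hx
            · subst hx
              rw [SetLike.mem_coe, Subgroup.mem_centralizer_iff]
              intro y hy
              rw [Set.mem_singleton_iff] at hy
              subst hy
              rw [mul_inv_eq_iff_eq_mul] at h1
              exact h1
            · rw [Set.mem_singleton_iff] at hx
              subst hx
              rw [SetLike.mem_coe, Subgroup.mem_centralizer_iff]
              intro y hy
              rw [Set.mem_singleton_iff] at hy
              subst hy
              rw [mul_inv_eq_iff_eq_mul] at h2
              exact h2
          have hmem := hle (Subgroup.mem_top h)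
          rw [Subgroup.mem_centralizer_iff] at hmem
          exact (hmem (g : G) rfl).symm
        have hbot : (g : G) ∈ Subgroup.center G ⊓ commutator G := ⟨hcen, g.property⟩
        rw [hz] at hbot
        exact Subtype.ext (by simpa using hbot)
      exact card_dvd_of_free_action hfree
    · -- quotient by M = center ⊓ commutator
      set M : Subgroup G := Subgroup.center G ⊓ commutator G with hMdef
      haveI hMn : M.Normal := normal_of_le_center' inf_le_left
      have hMc : M ≤ Subgroup.center G := inf_le_left
      have hMle : M ≤ commutator G := inf_le_right
      have hcommq : (commutator G).map (QuotientGroup.mk' M) = commutator (G ⧸ M) := by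
        rw [_root_.commutator_def, Subgroup.map_commutator,
          Subgroup.map_top_of_surjective _ (QuotientGroup.mk'_surjective M), _root_.commutator_def]
      have hmem : ∀ x : G,
          ((QuotientGroup.mk x : G ⧸ M) ∈ commutator (G ⧸ M)) ↔ x ∈ commutator G := by
        intro x
        rw [← hcommq]
        constructor
        · intro hx
          have hx' : x ∈ Subgroup.comap (QuotientGroup.mk' M)
              ((commutator G).map (QuotientGroup.mk' M)) := hx
          rwa [Subgroup.comap_map_eq, QuotientGroup.ker_mk', sup_eq_left.mpr hMle] at hx'
        · intro hx
          exact ⟨x, hx, rfl⟩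
      have hchain : ∀ w z : G,
          ((QuotientGroup.mk w : G ⧸ commutator G) = QuotientGroup.mk z) ↔
          ((QuotientGroup.mk (QuotientGroup.mk w : G ⧸ M) :
              (G ⧸ M) ⧸ commutator (G ⧸ M)) = QuotientGroup.mk (QuotientGroup.mk z : G ⧸ M)) := by
        intro w z
        rw [QuotientGroup.eq, QuotientGroup.eq]
        have hq : (QuotientGroup.mk w : G ⧸ M)⁻¹ * QuotientGroup.mk z
            = (QuotientGroup.mk (w⁻¹ * z) : G ⧸ M) := by
          simp
        rw [hq, hmem]
      have hsup : ∀ w z : G, Subgroup.closure {w, z} ⊔ M =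
          Subgroup.comap (QuotientGroup.mk' M)
            (Subgroup.closure {(QuotientGroup.mk w : G ⧸ M), QuotientGroup.mk z}) := by
        intro w z
        have h1 : (Subgroup.closure {w, z}).map (QuotientGroup.mk' M) =
            Subgroup.closure {(QuotientGroup.mk w : G ⧸ M), QuotientGroup.mk z} := by
          rw [MonoidHom.map_closure, Set.image_pair]
          rfl
        rw [← h1, Subgroup.comap_map_eq, QuotientGroup.ker_mk']
      have hgen_iff : ∀ w z : G,
          Subgroup.closure {(QuotientGroup.mk w : G ⧸ M), QuotientGroup.mk z} = ⊤ ↔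
          Subgroup.closure {w, z} = ⊤ := by
        intro w z
        constructor
        · intro htop
          apply eq_top_of_sup_central hMc hMle
          rw [hsup w z, htop, Subgroup.comap_top]
        · intro htop
          have h2 := congrArg (Subgroup.map (QuotientGroup.mk' M)) htop
          rw [MonoidHom.map_closure, Set.image_pair,
            Subgroup.map_top_of_surjective _ (QuotientGroup.mk'_surjective M)] at h2
          simpa using h2
      obtain ⟨x₀, hx₀⟩ := QuotientGroup.mk_surjective a
      obtain ⟨y₀, hy₀⟩ := QuotientGroup.mk_surjective b
      set aq : (G ⧸ M) ⧸ commutator (G ⧸ M) :=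
        QuotientGroup.mk (QuotientGroup.mk x₀ : G ⧸ M) with haq
      set bq : (G ⧸ M) ⧸ commutator (G ⧸ M) :=
        QuotientGroup.mk (QuotientGroup.mk y₀ : G ⧸ M) with hbq
      have haclass : ∀ w : G, ((QuotientGroup.mk w : G ⧸ commutator G) = a) ↔
          (QuotientGroup.mk (QuotientGroup.mk w : G ⧸ M) = aq) := by
        intro w
        rw [← hx₀, haq]
        exact hchain w x₀
      have hbclass : ∀ w : G, ((QuotientGroup.mk w : G ⧸ commutator G) = b) ↔
          (QuotientGroup.mk (QuotientGroup.mk w : G ⧸ M) = bq) := by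
        intro w
        rw [← hy₀, hbq]
        exact hchain w y₀
      set Sq : Set ((G ⧸ M) × (G ⧸ M)) := {q : (G ⧸ M) × (G ⧸ M) |
          Subgroup.closure {q.1, q.2} = ⊤ ∧
          QuotientGroup.mk q.1 = aq ∧ QuotientGroup.mk q.2 = bq} with hSqdef
      -- the key equivalence
      have hout : ∀ (q : G ⧸ M) (m : M), (QuotientGroup.mk (q.out * (m : G)) : G ⧸ M) = q := by
        intro q m
        rw [QuotientGroup.mk_mul_of_mem _ m.2, QuotientGroup.out_eq']
      have hequiv : S ≃ Sq × (M × M) := by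
        refine ⟨fun p => (⟨(QuotientGroup.mk p.val.1, QuotientGroup.mk p.val.2),
            ⟨(hgen_iff p.val.1 p.val.2).mpr p.property.1,
             (haclass p.val.1).mp p.property.2.1,
             (hbclass p.val.2).mp p.property.2.2⟩⟩,
            (⟨(QuotientGroup.mk p.val.1 : G ⧸ M).out⁻¹ * p.val.1,
               QuotientGroup.eq.mp (QuotientGroup.out_eq' _)⟩,
             ⟨(QuotientGroup.mk p.val.2 : G ⧸ M).out⁻¹ * p.val.2,
               QuotientGroup.eq.mp (QuotientGroup.out_eq' _)⟩)),
          fun q => ⟨(q.1.val.1.out * (q.2.1 : G), q.1.val.2.out * (q.2.2 : G)), ?_, ?_, ?_⟩,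
          ?_, ?_⟩
        · refine (hgen_iff _ _).mp ?_
          rw [hout q.1.val.1 q.2.1, hout q.1.val.2 q.2.2]
          exact q.1.property.1
        · refine (haclass _).mpr ?_
          rw [hout q.1.val.1 q.2.1]
          exact q.1.property.2.1
        · refine (hbclass _).mpr ?_
          rw [hout q.1.val.2 q.2.2]
          exact q.1.property.2.2
        · intro p
          apply Subtype.ext
          refine Prod.ext ?_ ?_ <;> simp
        · intro q
          have h1 := hout q.1.val.1 q.2.1
          have h2 := hout q.1.val.2 q.2.2
          refine Prod.ext (Subtype.ext (Prod.ext ?_ ?_)) (Prod.ext ?_ ?_)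
          · exact h1
          · exact h2
          · apply Subtype.ext
            show ((QuotientGroup.mk (q.1.val.1.out * (q.2.1 : G)) : G ⧸ M)).out⁻¹ *
              (q.1.val.1.out * (q.2.1 : G)) = (q.2.1 : G)
            rw [h1, inv_mul_cancel_left]
          · apply Subtype.ext
            show ((QuotientGroup.mk (q.1.val.2.out * (q.2.2 : G)) : G ⧸ M)).out⁻¹ *
              (q.1.val.2.out * (q.2.2 : G)) = (q.2.2 : G)
            rw [h2, inv_mul_cancel_left]
      have hcardS : Nat.card S = Nat.card Sq * (Nat.card M * Nat.card M) := by
        rw [Nat.card_congr hequiv, Nat.card_prod, Nat.card_prod]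
      -- card of commutator decomposes
      have hP1 : Nat.card (commutator G) = Nat.card (commutator (G ⧸ M)) * Nat.card M := by
        let ψ : (commutator G) →* G ⧸ M :=
          (QuotientGroup.mk' M).comp (commutator G).subtype
        have hker : ψ.ker = M.subgroupOf (commutator G) := by
          ext g
          simp [ψ, MonoidHom.mem_ker, Subgroup.mem_subgroupOf, QuotientGroup.eq_one_iff]
        have hrange : ψ.range = (commutator G).map (QuotientGroup.mk' M) := by
          ext q
          constructor
          · rintro ⟨g, rfl⟩
            exact ⟨g.val, g.property, rfl⟩
          · rintro ⟨x, hx, rfl⟩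
            exact ⟨⟨x, hx⟩, rfl⟩
        calc Nat.card (commutator G)
            = Nat.card ((commutator G) ⧸ ψ.ker) * Nat.card ψ.ker :=
              Subgroup.card_eq_card_quotient_mul_card_subgroup ψ.ker
          _ = Nat.card (commutator (G ⧸ M)) * Nat.card M := by
              rw [Nat.card_congr (QuotientGroup.quotientKerEquivRange ψ).toEquiv, hrange, hcommq,
                hker, Nat.card_congr (Subgroup.subgroupOfEquivOfLe hMle).toEquiv]
      have hM2 : 2 ≤ Nat.card M := by
        have := (Subgroup.one_lt_card_iff_ne_bot M).mpr hz
        omega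
      have hq1 : 1 ≤ Nat.card (commutator (G ⧸ M)) := Nat.card_pos
      have hlen : Nat.card (commutator (G ⧸ M)) ≤ n := by
        have hmul : Nat.card (commutator (G ⧸ M)) * 2 ≤
            Nat.card (commutator (G ⧸ M)) * Nat.card M :=
          Nat.mul_le_mul_left _ hM2
        rw [← hP1] at hmul
        omega
      have hdvd := ih (G ⧸ M) hlen aq bq
      rw [hcardS, hP1]
      exact mul_dvd_mul hdvd (dvd_mul_right _ _)

theorem stmt_5 (G : Type*) [Group G] [Fintype G] :
    Nat.card (commutator G) ∣
      Nat.card {p : G × G | Subgroup.closure {p.1, p.2} = ⊤} := by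
  classical
  have : Fintype ((G ⧸ commutator G) × (G ⧸ commutator G)) := Fintype.ofFinite _
  rw [card_set_eq_sum_fibers {p : G × G | Subgroup.closure {p.1, p.2} = ⊤}
    (fun p => ((QuotientGroup.mk p.1 : G ⧸ commutator G),
      (QuotientGroup.mk p.2 : G ⧸ commutator G)))]
  apply Finset.dvd_sum
  intro Y _
  have h := lemA (Nat.card (commutator G)) G le_rfl Y.1 Y.2
  have e : {x : G × G // x ∈ {p : G × G | Subgroup.closure {p.1, p.2} = ⊤} ∧
      ((QuotientGroup.mk x.1 : G ⧸ commutator G),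
       (QuotientGroup.mk x.2 : G ⧸ commutator G)) = Y} ≃
      {p : G × G | Subgroup.closure {p.1, p.2} = ⊤ ∧
        (QuotientGroup.mk p.1 : G ⧸ commutator G) = Y.1 ∧
        (QuotientGroup.mk p.2 : G ⧸ commutator G) = Y.2} :=
    Equiv.subtypeEquivRight (fun p => by
      simp [Set.mem_setOf_eq, Prod.ext_iff, and_assoc])
  rw [Nat.card_congr e]
  exact h
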